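/- In the noncommutative torus T²_θ with irrational θ, the closed 1-forms in the restricted derivation-based calculus modulo exact 1-forms form a 2-dimensional complex vector space: a 1-form ρ = aω + bη with a = Σ a_{kl}U^kV^l, b = Σ b_{kl}U^kV^l is closed if and only if k·b_{kl} = l·a_{kl} for all k, l ∈ Z, and H¹ ≅ C² is represented by {λω + μη : λ, μ ∈ C}. -/

import Mathlib

open Complex BigOperators

private lemma nct_deriv_one {A : Type*} [Ring A] [Algebra ℂ A] (d : A →ₗ[ℂ] A)
    (hd : ∀ x y : A, d (x * y) = d x * y + x * d y) : d 1 = 0 := by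
  have h := hd 1 1
  simp only [mul_one, one_mul] at h
  exact right_eq_add.mp h

private lemma nct_deriv_zpow {A : Type*} [Ring A] [Algebra ℂ A] (d : A →ₗ[ℂ] A)
    (hd : ∀ x y : A, d (x * y) = d x * y + x * d y)
    (u : Aˣ) (c : ℂ) (hu : d (u : A) = c • (u : A)) :
    ∀ n : ℤ, d ((u ^ n : Aˣ) : A) = (c * n) • ((u ^ n : Aˣ) : A) := by
  have h1 : d 1 = 0 := nct_deriv_one d hd
  have hnat : ∀ m : ℕ, d ((u ^ m : Aˣ) : A) = (c * m) • ((u ^ m : Aˣ) : A) := by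
    intro m
    induction m with
    | zero => simpa using h1
    | succ m ih =>
      have e : ((u ^ (m + 1) : Aˣ) : A) = ((u ^ m : Aˣ) : A) * (u : A) := by
        rw [pow_succ, Units.val_mul]
      rw [e, hd, ih, hu, smul_mul_assoc, mul_smul_comm, ← add_smul]
      congr 1
      push_cast
      ring
  intro n
  obtain ⟨m, rfl | rfl⟩ := n.eq_nat_or_neg
  · rw [zpow_natCast]
    simpa using hnat m
  · set x : A := ((u ^ m : Aˣ) : A)
    set w : A := ((u ^ (-(m : ℤ)) : Aˣ) : A)
    have hxw : x * w = 1 := by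
      rw [← Units.val_mul]
      have : (u ^ m : Aˣ) * u ^ (-(m : ℤ)) = 1 := by
        rw [← zpow_natCast u m, ← zpow_add u]
        simp
      rw [this, Units.val_one]
    have hwx : w * x = 1 := by
      rw [← Units.val_mul]
      have : (u ^ (-(m : ℤ)) : Aˣ) * u ^ m = 1 := by
        rw [← zpow_natCast u m, ← zpow_add u]
        simp
      rw [this, Units.val_one]
    have h0 : d x * w + x * d w = 0 := by rw [← hd, hxw, h1]
    have hx : d x = (c * m) • x := hnat m
    have hxd : x * d w = -((c * m) • (1 : A)) := by
      have h := h0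
      rw [hx, smul_mul_assoc, hxw] at h
      linear_combination (norm := module) h
    have : d w = (c * (-(m : ℤ))) • w := by
      calc d w = (w * x) * d w := by rw [hwx, one_mul]
        _ = w * (x * d w) := by rw [mul_assoc]
        _ = w * (-((c * m) • (1 : A))) := by rw [hxd]
        _ = (c * (-(m : ℤ))) • w := by
            rw [mul_neg, mul_smul_comm, mul_one]
            push_cast
            rw [mul_neg, neg_smul]
    rw [this]
    norm_num

private noncomputable def Tmap (g : ℤ × ℤ → ℂ) (f : ℤ × ℤ →₀ ℂ) : ℤ × ℤ →₀ ℂ :=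
  f.sum fun p c => Finsupp.single p (g p * c)

private lemma Tmap_apply (g : ℤ × ℤ → ℂ) (f : ℤ × ℤ →₀ ℂ) (p : ℤ × ℤ) :
    Tmap g f p = g p * f p := by
  classical
  rw [Tmap, Finsupp.sum_apply]
  simp only [Finsupp.single_apply]
  rw [Finsupp.sum_ite_eq']
  split_ifs with h
  · rfl
  · rw [Finsupp.notMem_support_iff.mp h, mul_zero]

/-- in the noncommutative torus (θ irrational), a 1-form
`ρ = aω + bη` with `a = Σ a_{kl}UᵏVˡ`, `b = Σ b_{kl}UᵏVˡ` is closed iff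
`k·b_{kl} = l·a_{kl}` for all `k, l`, and every closed 1-form is, modulo exact
forms, uniquely of the shape `λω + μη` with `λ, μ ∈ ℂ` (so `H¹ ≅ ℂ²`). -/
theorem stmt_14 {A : Type*} [Ring A] [Algebra ℂ A] (θ : ℝ) (hθ : Irrational θ)
    (q : ℂ) (hq : q = Complex.exp (2 * Real.pi * Complex.I * θ))
    (U V : Aˣ) (hUV : (V : A) * U = q • ((U : A) * V))
    (d1 d2 : A →ₗ[ℂ] A)
    (hd1 : ∀ x y : A, d1 (x * y) = d1 x * y + x * d1 y)
    (hd2 : ∀ x y : A, d2 (x * y) = d2 x * y + x * d2 y)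
    (hcomm : ∀ x : A, d1 (d2 x) = d2 (d1 x))
    (hd1U : d1 (U : A) = Complex.I • (U : A)) (hd1V : d1 (V : A) = 0)
    (hd2U : d2 (U : A) = 0) (hd2V : d2 (V : A) = Complex.I • (V : A))
    (Φ : (ℤ × ℤ →₀ ℂ) →ₗ[ℂ] A)
    (hΦ : ∀ f : ℤ × ℤ →₀ ℂ, Φ f = f.sum fun p c => c • ((U ^ p.1 * V ^ p.2 : Aˣ) : A))
    (hΦinj : Function.Injective Φ)
    (a b : ℤ × ℤ →₀ ℂ) :
    (d1 (Φ b) = d2 (Φ a) ↔ ∀ k l : ℤ, (k : ℂ) * b (k, l) = (l : ℂ) * a (k, l)) ∧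
    (d1 (Φ b) = d2 (Φ a) →
      ∃! p : ℂ × ℂ, ∃ c : ℤ × ℤ →₀ ℂ,
        Φ a = p.1 • (1 : A) + d1 (Φ c) ∧ Φ b = p.2 • (1 : A) + d2 (Φ c)) := by
  classical
  set mono : ℤ × ℤ → A := fun p => ((U ^ p.1 * V ^ p.2 : Aˣ) : A) with hmono
  -- derivatives of monomials
  have hUz : ∀ n : ℤ, d1 ((U ^ n : Aˣ) : A) = (Complex.I * n) • ((U ^ n : Aˣ) : A) :=
    nct_deriv_zpow d1 hd1 U Complex.I hd1U
  have hVz1 : ∀ n : ℤ, d1 ((V ^ n : Aˣ) : A) = 0 := by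
    intro n
    have := nct_deriv_zpow d1 hd1 V 0 (by simpa using hd1V) n
    simpa using this
  have hUz2 : ∀ n : ℤ, d2 ((U ^ n : Aˣ) : A) = 0 := by
    intro n
    have := nct_deriv_zpow d2 hd2 U 0 (by simpa using hd2U) n
    simpa using this
  have hVz : ∀ n : ℤ, d2 ((V ^ n : Aˣ) : A) = (Complex.I * n) • ((V ^ n : Aˣ) : A) :=
    nct_deriv_zpow d2 hd2 V Complex.I hd2V
  have hmono1 : ∀ p : ℤ × ℤ, d1 (mono p) = (Complex.I * p.1) • mono p := by
    intro p
    rw [hmono]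
    simp only [Units.val_mul]
    rw [hd1 _ _, hUz, hVz1, mul_zero, add_zero, smul_mul_assoc]
  have hmono2 : ∀ p : ℤ × ℤ, d2 (mono p) = (Complex.I * p.2) • mono p := by
    intro p
    rw [hmono]
    simp only [Units.val_mul]
    rw [hd2 _ _, hUz2, hVz, zero_mul, zero_add, mul_smul_comm]
  set T1 : (ℤ × ℤ →₀ ℂ) → (ℤ × ℤ →₀ ℂ) := Tmap fun p => Complex.I * p.1 with hT1
  set T2 : (ℤ × ℤ →₀ ℂ) → (ℤ × ℤ →₀ ℂ) := Tmap fun p => Complex.I * p.2 with hT2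
  have hΦsingle : ∀ (p : ℤ × ℤ) (x : ℂ), Φ (Finsupp.single p x) = x • mono p := by
    intro p x
    rw [hΦ, Finsupp.sum_single_index (by simp)]
  have hd1Φ : ∀ f : ℤ × ℤ →₀ ℂ, d1 (Φ f) = Φ (T1 f) := by
    intro f
    rw [hΦ, map_finsuppSum, hT1, Tmap, map_finsuppSum]
    refine Finsupp.sum_congr fun p _ => ?_
    rw [map_smul, hmono1, hΦsingle, smul_smul, mul_comm]
  have hd2Φ : ∀ f : ℤ × ℤ →₀ ℂ, d2 (Φ f) = Φ (T2 f) := by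
    intro f
    rw [hΦ, map_finsuppSum, hT2, Tmap, map_finsuppSum]
    refine Finsupp.sum_congr fun p _ => ?_
    rw [map_smul, hmono2, hΦsingle, smul_smul, mul_comm]
  have key : d1 (Φ b) = d2 (Φ a) ↔ T1 b = T2 a := by
    rw [hd1Φ, hd2Φ]
    exact ⟨fun h => hΦinj h, fun h => by rw [h]⟩
  have hiff : d1 (Φ b) = d2 (Φ a) ↔ ∀ k l : ℤ, (k : ℂ) * b (k, l) = (l : ℂ) * a (k, l) := by
    rw [key]
    constructor
    · intro h k l
      have h' := DFunLike.congr_fun h (k, l)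
      rw [hT1, hT2, Tmap_apply, Tmap_apply] at h'
      rw [mul_assoc, mul_assoc] at h'
      exact mul_left_cancel₀ Complex.I_ne_zero h'
    · intro h
      ext p
      obtain ⟨k, l⟩ := p
      rw [hT1, hT2, Tmap_apply, Tmap_apply, mul_assoc, mul_assoc, h k l]
  refine ⟨hiff, fun hclosed => ?_⟩
  have hc := hiff.mp hclosed
  set cf : ℤ × ℤ → ℂ := fun p =>
    if p.1 ≠ 0 then a p / (Complex.I * p.1)
    else if p.2 ≠ 0 then b p / (Complex.I * p.2) else 0 with hcf
  have hsupp : ∀ p, cf p ≠ 0 → p ∈ a.support ∪ b.support := by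
    intro p hp
    by_contra h
    simp only [Finset.mem_union, Finsupp.mem_support_iff, not_or, not_not] at h
    apply hp
    rw [hcf]
    simp only [h.1, h.2, zero_div, ite_self]
  set c : ℤ × ℤ →₀ ℂ := Finsupp.onFinset (a.support ∪ b.support) cf hsupp with hcdef
  have hcapp : ∀ p, c p = cf p := fun p => rfl
  have mono00 : mono (0, 0) = 1 := by
    rw [hmono]
    simp
  have ha' : a = Finsupp.single ((0 : ℤ), (0 : ℤ)) (a (0, 0)) + T1 c := by
    ext p
    obtain ⟨k, l⟩ := p
    simp only [Finsupp.add_apply, Finsupp.single_apply, hT1, Tmap_apply, hcapp, hcf]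
    by_cases hk : k = 0
    · subst hk
      by_cases hl : l = 0
      · subst hl
        norm_num
      · have h0 := hc 0 l
        simp only [Int.cast_zero, zero_mul] at h0
        have hl' : (l : ℂ) ≠ 0 := Int.cast_ne_zero.mpr hl
        have ha0 : a (0, l) = 0 := by
          rcases mul_eq_zero.mp h0.symm with h | h
          · exact absurd h hl'
          · exact h
        have hne : ((0 : ℤ), (0 : ℤ)) ≠ ((0 : ℤ), l) := fun h =>
          hl (congrArg Prod.snd h).symm
        rw [if_neg hne, ha0, zero_add]
        norm_num
    · have hk' : (k : ℂ) ≠ 0 := Int.cast_ne_zero.mpr hk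
      have hne : ((0 : ℤ), (0 : ℤ)) ≠ (k, l) := fun h =>
        hk (congrArg Prod.fst h).symm
      rw [if_neg hne, zero_add, if_pos hk]
      field_simp
  have hb' : b = Finsupp.single ((0 : ℤ), (0 : ℤ)) (b (0, 0)) + T2 c := by
    ext p
    obtain ⟨k, l⟩ := p
    simp only [Finsupp.add_apply, Finsupp.single_apply, hT2, Tmap_apply, hcapp, hcf]
    by_cases hk : k = 0
    · subst hk
      by_cases hl : l = 0
      · subst hl
        norm_num
      · have hl' : (l : ℂ) ≠ 0 := Int.cast_ne_zero.mpr hl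
        have hne : ((0 : ℤ), (0 : ℤ)) ≠ ((0 : ℤ), l) := fun h =>
          hl (congrArg Prod.snd h).symm
        rw [if_neg hne, zero_add, if_neg (by simp), if_pos hl]
        field_simp
    · have hk' : (k : ℂ) ≠ 0 := Int.cast_ne_zero.mpr hk
      have hne : ((0 : ℤ), (0 : ℤ)) ≠ (k, l) := fun h =>
        hk (congrArg Prod.fst h).symm
      rw [if_neg hne, zero_add, if_pos hk]
      have hkl := hc k l
      field_simp
      linear_combination hkl
  have hΦ1 : Φ a = (a (0, 0)) • (1 : A) + d1 (Φ c) := by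
    rw [hd1Φ]
    conv_lhs => rw [ha']
    rw [map_add, hΦsingle, mono00]
  have hΦ2 : Φ b = (b (0, 0)) • (1 : A) + d2 (Φ c) := by
    rw [hd2Φ]
    conv_lhs => rw [hb']
    rw [map_add, hΦsingle, mono00]
  refine ⟨(a (0, 0), b (0, 0)), ⟨c, hΦ1, hΦ2⟩, ?_⟩
  rintro ⟨p1, p2⟩ ⟨c', h1, h2⟩
  have e1 : a = Finsupp.single ((0 : ℤ), (0 : ℤ)) p1 + T1 c' := by
    apply hΦinj
    rw [map_add, hΦsingle, mono00, ← hd1Φ]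
    exact h1
  have e2 : b = Finsupp.single ((0 : ℤ), (0 : ℤ)) p2 + T2 c' := by
    apply hΦinj
    rw [map_add, hΦsingle, mono00, ← hd2Φ]
    exact h2
  have v1 := DFunLike.congr_fun e1 ((0 : ℤ), (0 : ℤ))
  have v2 := DFunLike.congr_fun e2 ((0 : ℤ), (0 : ℤ))
  rw [Finsupp.add_apply, Finsupp.single_apply, hT1, Tmap_apply] at v1
  rw [Finsupp.add_apply, Finsupp.single_apply, hT2, Tmap_apply] at v2
  simp only [if_pos rfl, Int.cast_zero, mul_zero, zero_mul, add_zero] at v1 v2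
  exact Prod.ext v1.symm v2.symm
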